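/- Let X and Y be topological spaces, K a compactification of X, μZ a uniform space, and f : X × Y → Z a continuous map such that for every y ∈ Y the map f(·,y) : X → Z admits a continuous extension K → Z. If the family {f(x,·) : x ∈ X} is relatively compact in C_∞(Y, μZ), then f extends to a continuous map F : K × Y → Z with F restricted to X × Y equal to f. -/

import Mathlib

open scoped UniformConvergence Uniformity Topology

/-- **Lemma 2.3 (a ⇒ d).** Let `K` be a compactification of `X` (via the dense embedding `e`),
`μZ` a uniform space and `f : X × Y → Z` continuous such that every partial map `f(·,y)` extends
continuously to `K`. If the family `{f(x,·) : x ∈ X}` is relatively compact in `C_∞(Y, μZ)`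
(uniform convergence), then `f` extends to a continuous map `K × Y → Z`. -/
theorem extension_of_relatively_compact {X Y K Z : Type*}
    [TopologicalSpace X] [TopologicalSpace Y] [TopologicalSpace K]
    [CompactSpace K] [T2Space K] [UniformSpace Z]
    (e : X → K) (he : IsDenseEmbedding e)
    (f : X × Y → Z) (hf : Continuous f)
    (hext : ∀ y : Y, ∃ F : K → Z, Continuous F ∧ ∀ x : X, F (e x) = f (x, y))
    (hc : IsCompact (closure {u : Y →ᵤ Z | ∃ x : X, u = UniformFun.ofFun fun y => f (x, y)})) :
    ∃ F : K × Y → Z, Continuous F ∧ ∀ (x : X) (y : Y), F (e x, y) = f (x, y) := by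
  classical
  set g : Y → K → Z := fun y => (hext y).choose with hgdef
  have hgc : ∀ y, Continuous (g y) := fun y => (hext y).choose_spec.1
  have hge : ∀ y x, g y (e x) = f (x, y) := fun y x => (hext y).choose_spec.2 x
  refine ⟨fun p => g p.2 p.1, ?_, fun x y => hge y x⟩
  rw [continuous_iff_continuousAt]
  rintro ⟨k₀, y₀⟩
  rw [ContinuousAt, Uniform.tendsto_nhds_right]
  intro B hB
  obtain ⟨t₁, ht₁, ht₁s, ht₁c⟩ := comp_symm_mem_uniformity_sets hB
  obtain ⟨C, hC, hCc, hCt₁⟩ := mem_uniformity_isClosed ht₁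
  obtain ⟨t₂, ht₂, ht₂s, ht₂C⟩ := comp_symm_mem_uniformity_sets hC
  obtain ⟨D, hD, hDs, hDt₂⟩ := comp_symm_mem_uniformity_sets ht₂
  have hDsub : D ⊆ t₂ := fun z hz =>
    hDt₂ (SetRel.prodMk_mem_comp (refl_mem_uniformity hD) hz)
  set S : Set (Y →ᵤ Z) := {u | ∃ x : X, u = UniformFun.ofFun fun y => f (x, y)} with hSdef
  have hSt : TotallyBounded S := hc.totallyBounded.subset subset_closure
  have hgen : UniformFun.gen Y Z D ∈ 𝓤 (Y →ᵤ Z) :=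
    (UniformFun.hasBasis_uniformity Y Z).mem_of_mem hD
  obtain ⟨T, hTS, hTfin, hTcov⟩ := (totallyBounded_iff_subset.mp hSt) _ hgen
  have key : ∀ u ∈ T, ∃ x : X, u = UniformFun.ofFun fun y => f (x, y) := fun u hu => hTS hu
  choose xu hxu using key
  have hTsub : Finite T := hTfin.to_subtype
  set V : Set Y :=
    ⋂ (u : T), {y | (f (xu u.1 u.2, y₀), f (xu u.1 u.2, y)) ∈ D} with hVdef
  have hV : V ∈ 𝓝 y₀ := by
    rw [hVdef]
    refine Filter.iInter_mem.mpr fun u => ?_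
    have hcont : Continuous fun y => f (xu u.1 u.2, y) := hf.comp (Continuous.prodMk_right _)
    exact hcont.continuousAt.preimage_mem_nhds (UniformSpace.ball_mem_nhds _ hD)
  have claimA : ∀ (x : X) (y : Y), y ∈ V → (f (x, y₀), f (x, y)) ∈ C := by
    intro x y hy
    have hxS : (UniformFun.ofFun fun y => f (x, y)) ∈ S := ⟨x, rfl⟩
    have := hTcov hxS
    rw [Set.mem_iUnion₂] at this
    obtain ⟨u, hu, hrel⟩ := this
    have hrel' : ∀ y' : Y, (f (x, y'), f (xu u hu, y')) ∈ D := by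
      intro y'
      have := hrel
      rw [hxu u hu] at this
      exact this y'
    have h1 : (f (x, y₀), f (xu u hu, y₀)) ∈ D := hrel' y₀
    have h2 : (f (xu u hu, y₀), f (xu u hu, y)) ∈ D := by
      exact Set.mem_iInter.mp hy ⟨u, hu⟩
    have h3 : (f (xu u hu, y), f (x, y)) ∈ D := hDs.symm _ _ (hrel' y)
    exact ht₂C (SetRel.prodMk_mem_comp (hDt₂ (SetRel.prodMk_mem_comp h1 h2)) (hDsub h3))
  have claimB : ∀ y ∈ V, ∀ k : K, (g y₀ k, g y k) ∈ C := by
    intro y hy k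
    have hclosed : IsClosed {k : K | (g y₀ k, g y k) ∈ C} :=
      hCc.preimage ((hgc y₀).prodMk (hgc y))
    have hsub : Set.range e ⊆ {k | (g y₀ k, g y k) ∈ C} := by
      rintro _ ⟨x, rfl⟩
      simp only [Set.mem_setOf_eq, hge]
      exact claimA x y hy
    exact hclosed.closure_subset_iff.mpr hsub (he.dense k)
  have hU : {k : K | (g y₀ k₀, g y₀ k) ∈ t₁} ∈ 𝓝 k₀ :=
    (hgc y₀).continuousAt.preimage_mem_nhds (UniformSpace.ball_mem_nhds _ ht₁)
  rw [nhds_prod_eq, Filter.mem_map]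
  refine Filter.mem_of_superset (Filter.prod_mem_prod hU hV) ?_
  rintro ⟨k, y⟩ ⟨h1, h2⟩
  exact ht₁c (SetRel.prodMk_mem_comp h1 (hCt₁ (claimB _ h2 k)))
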